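/- Let S : Fin n → α and P : Fin m → β be sequences over linear orders with i + m ≤ n. Then P has an order-preserving occurrence at position i in S if and only if E(P) is a prefix of the rank encoding of the suffix of S starting at i, i.e., for all j < m, E(j ↦ S(i+j), of length n−i)(j) = E(P)(j). -/

import Mathlib

/- The rank encoding `E(s)` of a sequence `s : Fin m → α` over a linear order:
`E(s)(i) = d_i + 1` if `s i` equals some earlier character, and `d_i + 1/2` otherwise,
where `d_i` is the number of distinct values among `s 0, …, s (i-1)` strictly smaller
than `s i`. -/
open Classical in
noncomputable def rankEncode {m : ℕ} {α : Type*} [LinearOrder α] (s : Fin m → α) :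
    Fin m → ℚ := fun i =>
  ((((Finset.univ : Finset (Fin m)).filter (fun j : Fin m => (j : ℕ) < (i : ℕ))).image s).filter
      (fun a => a < s i)).card +
    (if ∃ j : Fin m, (j : ℕ) < (i : ℕ) ∧ s j = s i then 1 else 1/2)
/-- Two sequences of the same length over linear orders are order-isomorphic if
their characters compare the same way at every pair of positions. -/
def OrderIsoSeq {m : ℕ} {α β : Type*} [LinearOrder α] [LinearOrder β]
    (s : Fin m → α) (t : Fin m → β) : Prop :=
  ∀ i j : Fin m, s i ≤ s j ↔ t i ≤ t j

private lemma card_image_congr {γ α β : Type*} [DecidableEq α] [DecidableEq β]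
    {f : γ → α} {g : γ → β} {B : Finset γ}
    (h : ∀ j ∈ B, ∀ k ∈ B, (f j = f k ↔ g j = g k)) :
    (B.image f).card = (B.image g).card := by
  refine Finset.card_bij (fun a ha => g (Finset.mem_image.mp ha).choose) ?_ ?_ ?_
  · intro a ha
    obtain ⟨hj, -⟩ := (Finset.mem_image.mp ha).choose_spec
    exact Finset.mem_image_of_mem g hj
  · intro a₁ ha₁ a₂ ha₂ hg
    obtain ⟨hj₁, hf₁⟩ := (Finset.mem_image.mp ha₁).choose_spec
    obtain ⟨hj₂, hf₂⟩ := (Finset.mem_image.mp ha₂).choose_spec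
    rw [← hf₁, ← hf₂]
    exact (h _ hj₁ _ hj₂).mpr hg
  · intro b hb
    obtain ⟨k, hk, rfl⟩ := Finset.mem_image.mp hb
    refine ⟨f k, Finset.mem_image_of_mem f hk, ?_⟩
    obtain ⟨hj, hf⟩ := (Finset.mem_image.mp (Finset.mem_image_of_mem f hk)).choose_spec
    exact (h _ hj _ hk).mp hf

private lemma nat_add_eps_inj {a b : ℕ} {x y : ℚ} (hx : x = 1 ∨ x = 1/2) (hy : y = 1 ∨ y = 1/2)
    (h : (a : ℚ) + x = b + y) : a = b ∧ x = y := by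
  rcases hx with rfl | rfl <;> rcases hy with rfl | rfl
  · exact ⟨by exact_mod_cast add_right_cancel h, rfl⟩
  · exfalso
    have h2 : ((2*a+2 : ℕ) : ℚ) = ((2*b+1 : ℕ) : ℚ) := by push_cast; linarith
    have := Nat.cast_injective (R := ℚ) h2
    omega
  · exfalso
    have h2 : ((2*a+1 : ℕ) : ℚ) = ((2*b+2 : ℕ) : ℚ) := by push_cast; linarith
    have := Nat.cast_injective (R := ℚ) h2
    omega
  · exact ⟨by exact_mod_cast add_right_cancel h, rfl⟩

private lemma if_eps_mem {c : Prop} [Decidable c] :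
    (if c then (1:ℚ) else 1/2) = 1 ∨ (if c then (1:ℚ) else 1/2) = 1/2 := by
  by_cases hc : c
  · left; rw [if_pos hc]
  · right; rw [if_neg hc]

private lemma if_eps_iff {c1 c2 : Prop} [Decidable c1] [Decidable c2]
    (h : (if c1 then (1:ℚ) else 1/2) = if c2 then 1 else 1/2) : c1 ↔ c2 := by
  by_cases h1 : c1 <;> by_cases h2 : c2
  · exact iff_of_true h1 h2
  · rw [if_pos h1, if_neg h2] at h; norm_num at h
  · rw [if_neg h1, if_pos h2] at h; norm_num at h
  · exact iff_of_false h1 h2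

section Main

variable {m : ℕ} {α : Type*} {β : Type*} [LinearOrder α] [LinearOrder β]

open Finset

open Classical in
private lemma strict_step (s : Fin m → α) (t : Fin m → β) (p : Fin m)
    (hlt : ∀ i j : Fin m, (i:ℕ) < (p:ℕ) → (j:ℕ) < (p:ℕ) → (s i < s j ↔ t i < t j))
    (heq : ∀ i j : Fin m, (i:ℕ) < (p:ℕ) → (j:ℕ) < (p:ℕ) → (s i = s j ↔ t i = t j))
    (hcard : ((((Finset.univ : Finset (Fin m)).filter (fun j : Fin m => (j:ℕ) < (p:ℕ))).image s).filter
        (fun a => a < s p)).card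
      = ((((Finset.univ : Finset (Fin m)).filter (fun j : Fin m => (j:ℕ) < (p:ℕ))).image t).filter
        (fun a => a < t p)).card)
    {i : Fin m} (hi : (i:ℕ) < (p:ℕ)) (hsi : s i < s p) : t i < t p := by
  by_contra hti
  push_neg at hti
  set A : Finset (Fin m) := Finset.univ.filter (fun j : Fin m => (j:ℕ) < (p:ℕ)) with hA
  set Bs := A.filter (fun j => s j < s p) with hBs
  set Bt := A.filter (fun j => t j < t p) with hBt
  have hmemA : ∀ j : Fin m, j ∈ A ↔ (j:ℕ) < (p:ℕ) := by intro j; simp [hA]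
  have hBtBs : Bt ⊆ Bs := by
    intro k hk
    rw [hBt, mem_filter] at hk
    have hkp : (k:ℕ) < (p:ℕ) := (hmemA k).mp hk.1
    have h1 : t k < t i := lt_of_lt_of_le hk.2 hti
    have h2 : s k < s i := (hlt k i hkp hi).mpr h1
    exact mem_filter.mpr ⟨hk.1, lt_trans h2 hsi⟩
  have hiBs : i ∈ Bs := mem_filter.mpr ⟨(hmemA i).mpr hi, hsi⟩
  have h1 : (Bs.image s).card = (Bs.image t).card := by
    apply card_image_congr
    intro j hj k hk
    exact heq j k ((hmemA j).mp (mem_filter.mp hj).1) ((hmemA k).mp (mem_filter.mp hk).1)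
  have h2 : ((A.image s).filter (fun a => a < s p)) = Bs.image s := by
    rw [hBs, filter_image]
  have h3 : ((A.image t).filter (fun a => a < t p)) = Bt.image t := by
    rw [hBt, filter_image]
  have hcard' : (Bs.image t).card = (Bt.image t).card := by
    rw [← h1, ← h2, ← h3]; exact hcard
  have hsub : Bt.image t ⊆ Bs.image t := image_subset_image hBtBs
  have heqset : Bt.image t = Bs.image t := eq_of_subset_of_card_le hsub (le_of_eq hcard')
  have hmem : t i ∈ Bt.image t := by rw [heqset]; exact mem_image_of_mem t hiBs
  obtain ⟨k, hk, hkeq⟩ := mem_image.mp hmem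
  have hklt : t k < t p := (mem_filter.mp hk).2
  exact absurd hklt (by rw [hkeq]; exact not_lt.mpr hti)

private lemma eq_step (s : Fin m → α) (t : Fin m → β) (p : Fin m)
    (hlt : ∀ i j : Fin m, (i:ℕ) < (p:ℕ) → (j:ℕ) < (p:ℕ) → (s i < s j ↔ t i < t j))
    (hstrict : ∀ i : Fin m, (i:ℕ) < (p:ℕ) → (s i < s p ↔ t i < t p))
    (heps : (∃ j : Fin m, (j:ℕ) < (p:ℕ) ∧ s j = s p) → (∃ j : Fin m, (j:ℕ) < (p:ℕ) ∧ t j = t p))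
    {i : Fin m} (hi : (i:ℕ) < (p:ℕ)) (hsi : s i = s p) : t i = t p := by
  by_contra hne
  rcases lt_or_gt_of_ne hne with hlt' | hgt
  · exact absurd ((hstrict i hi).mpr hlt') (by rw [hsi]; exact lt_irrefl _)
  · obtain ⟨j, hj, htj⟩ := heps ⟨i, hi, hsi⟩
    have h1 : t j < t i := by rw [htj]; exact hgt
    have h2 : s j < s i := (hlt j i hj hi).mpr h1
    rw [hsi] at h2
    exact absurd ((hstrict j hj).mp h2) (by rw [htj]; exact lt_irrefl _)

open Classical in
private lemma le_step (s : Fin m → α) (t : Fin m → β) (p : Fin m)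
    (hcons : ∀ i j : Fin m, (i:ℕ) < (p:ℕ) → (j:ℕ) < (p:ℕ) → (s i ≤ s j ↔ t i ≤ t j))
    (hrk : rankEncode s p = rankEncode t p) {i : Fin m} (hi : (i:ℕ) < (p:ℕ)) :
    (s i ≤ s p ↔ t i ≤ t p) ∧ (s p ≤ s i ↔ t p ≤ t i) := by
  have hlt : ∀ a b : Fin m, (a:ℕ) < (p:ℕ) → (b:ℕ) < (p:ℕ) → (s a < s b ↔ t a < t b) := by
    intro a b ha hb
    rw [lt_iff_not_ge, lt_iff_not_ge, hcons b a hb ha]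
  have heq : ∀ a b : Fin m, (a:ℕ) < (p:ℕ) → (b:ℕ) < (p:ℕ) → (s a = s b ↔ t a = t b) := by
    intro a b ha hb
    constructor <;> intro hh
    · exact le_antisymm ((hcons a b ha hb).mp hh.le) ((hcons b a hb ha).mp hh.ge)
    · exact le_antisymm ((hcons a b ha hb).mpr hh.le) ((hcons b a hb ha).mpr hh.ge)
  simp only [rankEncode] at hrk
  obtain ⟨hcard, hepseq⟩ := nat_add_eps_inj if_eps_mem if_eps_mem hrk
  have heps := if_eps_iff hepseq
  have hstrict : ∀ a : Fin m, (a:ℕ) < (p:ℕ) → (s a < s p ↔ t a < t p) := by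
    intro a ha
    constructor
    · exact strict_step s t p hlt heq hcard ha
    · exact strict_step t s p (fun a b ha hb => (hlt a b ha hb).symm)
        (fun a b ha hb => (heq a b ha hb).symm) hcard.symm ha
  have heqp : ∀ a : Fin m, (a:ℕ) < (p:ℕ) → (s a = s p ↔ t a = t p) := by
    intro a ha
    constructor
    · exact eq_step s t p hlt hstrict (fun he => heps.mp he) ha
    · exact eq_step t s p (fun a b ha hb => (hlt a b ha hb).symm)
        (fun a ha => (hstrict a ha).symm) (fun he => heps.mpr he) ha
  constructor
  · constructor
    · intro hh
      rcases hh.lt_or_eq with hh | hh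
      · exact ((hstrict i hi).mp hh).le
      · exact ((heqp i hi).mp hh).le
    · intro hh
      rcases hh.lt_or_eq with hh | hh
      · exact ((hstrict i hi).mpr hh).le
      · exact ((heqp i hi).mpr hh).le
  · rw [← not_lt, ← not_lt]
    exact not_congr (hstrict i hi)

open Classical in
private lemma orderIsoSeq_iff_rankEncode (s : Fin m → α) (t : Fin m → β) :
    OrderIsoSeq s t ↔ ∀ j, rankEncode s j = rankEncode t j := by
  constructor
  · intro hiso p
    have hlt : ∀ i j : Fin m, s i < s j ↔ t i < t j := by
      intro i j
      rw [lt_iff_not_ge, lt_iff_not_ge, hiso j i]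
    have heq : ∀ i j : Fin m, s i = s j ↔ t i = t j := by
      intro i j
      constructor <;> intro hh
      · exact le_antisymm ((hiso i j).mp hh.le) ((hiso j i).mp hh.ge)
      · exact le_antisymm ((hiso i j).mpr hh.le) ((hiso j i).mpr hh.ge)
    simp only [rankEncode]
    have hfilt : (Finset.univ.filter (fun j : Fin m => (j:ℕ) < (p:ℕ))).filter
          (fun j => s j < s p)
        = (Finset.univ.filter (fun j : Fin m => (j:ℕ) < (p:ℕ))).filter
          (fun j => t j < t p) := by
      apply filter_congr
      intro j _
      simp [hlt j p]
    have hcard : ((((Finset.univ : Finset (Fin m)).filter (fun j : Fin m => (j:ℕ) < (p:ℕ))).image s).filter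
          (fun a => a < s p)).card
        = ((((Finset.univ : Finset (Fin m)).filter (fun j : Fin m => (j:ℕ) < (p:ℕ))).image t).filter
          (fun a => a < t p)).card := by
      rw [filter_image, filter_image, hfilt]
      exact card_image_congr (fun j _ k _ => heq j k)
    have hepsiff : (∃ j : Fin m, (j:ℕ) < (p:ℕ) ∧ s j = s p)
        ↔ (∃ j : Fin m, (j:ℕ) < (p:ℕ) ∧ t j = t p) := by
      constructor
      · rintro ⟨j, hj, hje⟩; exact ⟨j, hj, (heq j p).mp hje⟩
      · rintro ⟨j, hj, hje⟩; exact ⟨j, hj, (heq j p).mpr hje⟩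
    rw [hcard]
    exact congrArg (fun z => (_ : ℚ) + z) (if_congr hepsiff rfl rfl)
  · intro hrk
    suffices h : ∀ N : ℕ, ∀ i j : Fin m, (i:ℕ) < N → (j:ℕ) < N → (s i ≤ s j ↔ t i ≤ t j) by
      intro i j; exact h m i j i.isLt j.isLt
    intro N
    induction N with
    | zero => intro i j hi hj; omega
    | succ N IH =>
      intro i j hi hj
      by_cases hiN : (i:ℕ) < N
      · by_cases hjN : (j:ℕ) < N
        · exact IH i j hiN hjN
        · have hjN' : (j:ℕ) = N := by omega
          have := le_step s t j (fun a b ha hb => IH a b (by omega) (by omega)) (hrk j)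
            (i := i) (by omega)
          exact this.1
      · have hiN' : (i:ℕ) = N := by omega
        by_cases hjN : (j:ℕ) < N
        · have := le_step s t i (fun a b ha hb => IH a b (by omega) (by omega)) (hrk i)
            (i := j) (by omega)
          exact this.2
        · have hij : i = j := Fin.ext (by omega)
          subst hij
          simp

open Classical in
private lemma rankEncode_restrict {N : ℕ} (hm : m ≤ N) (s : Fin N → α) (j : Fin m) :
    rankEncode (fun k : Fin m => s ⟨(k:ℕ), lt_of_lt_of_le k.isLt hm⟩) j
      = rankEncode s ⟨(j:ℕ), lt_of_lt_of_le j.isLt hm⟩ := by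
  simp only [rankEncode]
  have himg : ((Finset.univ.filter (fun k : Fin m => (k:ℕ) < (j:ℕ))).image
        (fun k : Fin m => s ⟨(k:ℕ), lt_of_lt_of_le k.isLt hm⟩))
      = ((Finset.univ.filter (fun k : Fin N => (k:ℕ) < ((⟨(j:ℕ), lt_of_lt_of_le j.isLt hm⟩ : Fin N):ℕ))).image s) := by
    ext a
    simp only [mem_image, mem_filter, mem_univ, true_and]
    constructor
    · rintro ⟨k, hk, rfl⟩
      exact ⟨⟨(k:ℕ), lt_of_lt_of_le k.isLt hm⟩, hk, rfl⟩
    · rintro ⟨k, hk, rfl⟩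
      refine ⟨⟨(k:ℕ), lt_trans hk j.isLt⟩, hk, ?_⟩
      exact congrArg s (Fin.ext rfl)
  have hex : (∃ k : Fin m, (k:ℕ) < (j:ℕ) ∧
        s ⟨(k:ℕ), lt_of_lt_of_le k.isLt hm⟩ = s ⟨(j:ℕ), lt_of_lt_of_le j.isLt hm⟩)
      ↔ (∃ k : Fin N, (k:ℕ) < ((⟨(j:ℕ), lt_of_lt_of_le j.isLt hm⟩ : Fin N):ℕ) ∧
        s k = s ⟨(j:ℕ), lt_of_lt_of_le j.isLt hm⟩) := by
    constructor
    · rintro ⟨k, hk, he⟩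
      exact ⟨⟨(k:ℕ), lt_of_lt_of_le k.isLt hm⟩, hk, he⟩
    · rintro ⟨k, hk, he⟩
      refine ⟨⟨(k:ℕ), lt_trans hk j.isLt⟩, hk, ?_⟩
      rw [show (⟨(k:ℕ), lt_of_lt_of_le (Fin.isLt ⟨(k:ℕ), lt_trans hk j.isLt⟩) hm⟩ : Fin N) = k from Fin.ext rfl]
      exact he
    -- note hk : k.val < j.val on both sides since coercion values agree
  rw [himg]
  exact congrArg (fun z => (_ : ℚ) + z) (if_congr hex rfl rfl)

end Main

/-- `P` has an order-preserving occurrence at position `i` in `S` (given `i + m ≤ n`)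
iff `E(P)` is a prefix of the rank encoding of the suffix of `S` starting at `i`. -/
theorem opOccur_iff_rankEncode_prefix {n m : ℕ} {α β : Type*} [LinearOrder α] [LinearOrder β]
    (S : Fin n → α) (P : Fin m → β) (i : ℕ) (h : i + m ≤ n) :
    OrderIsoSeq P (fun j : Fin m => S ⟨i + (j : ℕ), by have := j.isLt; omega⟩) ↔
      ∀ j : Fin m,
        rankEncode (fun k : Fin (n - i) => S ⟨i + (k : ℕ), by have := k.isLt; omega⟩)
            ⟨(j : ℕ), by have := j.isLt; omega⟩ =
          rankEncode P j := by
  have hm : m ≤ n - i := by omega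
  have key : ∀ j : Fin m,
      rankEncode (fun k : Fin (n - i) => S ⟨i + (k : ℕ), by have := k.isLt; omega⟩)
          ⟨(j : ℕ), by have := j.isLt; omega⟩
        = rankEncode (fun j : Fin m => S ⟨i + (j : ℕ), by have := j.isLt; omega⟩) j := by
    intro j
    exact (rankEncode_restrict hm
      (fun k : Fin (n - i) => S ⟨i + (k : ℕ), by have := k.isLt; omega⟩) j).symm
  constructor
  · intro hiso j
    rw [key j]
    exact ((orderIsoSeq_iff_rankEncode P _).mp hiso j).symm
  · intro hr
    apply (orderIsoSeq_iff_rankEncode P _).mpr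
    intro j
    exact ((hr j).symm.trans (key j))
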